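/- arXiv:2401.10143 — 3 statements merged into one kernel-verified Lean document; each statement's English description precedes it below -/
import Mathlib

section
/- There exists a formal context (A, X, I) and an I-compatible equivalence relation E ⊆ A × A such that the induced lower approximation S□ ⊆ A × X, defined by a S□ x iff ∀b (aEb → bIx), is not I-compatible. Concretely: A = {a, b}, X = {x, y}, I = {(a,x), (a,y), (b,y)}, E = A × A; then S□⁽⁰⁾[x] = ∅, but ∅^{↑↓} = {a} ≠ ∅, so S□⁽⁰⁾[x] is not Galois-stable. -/
def upPolar {A X : Type*} (I : Set (A × X)) (B : Set A) : Set X :=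
  {x | ∀ a ∈ B, (a, x) ∈ I}

def downPolar {A X : Type*} (I : Set (A × X)) (Y : Set X) : Set A :=
  {a | ∀ x ∈ Y, (a, x) ∈ I}

theorem exists_E_compatible_Sbox_not :
    ∃ (I : Set (Bool × Bool)) (E : Set (Bool × Bool)),
      Equivalence (fun a b => (a, b) ∈ E) ∧
      -- E is I-compatible: both polars of E are Galois-stable subsets of A
      (∀ b : Bool, ({a | (a, b) ∈ E} : Set Bool) =
          downPolar I (upPolar I {a | (a, b) ∈ E})) ∧
      (∀ a : Bool, ({b | (a, b) ∈ E} : Set Bool) =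
          downPolar I (upPolar I {b | (a, b) ∈ E})) ∧
      -- but S□, defined by a S□ x iff ∀ b, aEb → bIx, is not I-compatible
      ¬ ((∀ x : Bool,
            ({a | ∀ b, (a, b) ∈ E → (b, x) ∈ I} : Set Bool) =
              downPolar I (upPolar I {a | ∀ b, (a, b) ∈ E → (b, x) ∈ I})) ∧
         (∀ a : Bool,
            ({x | ∀ b, (a, b) ∈ E → (b, x) ∈ I} : Set Bool) =
              upPolar I (downPolar I {x | ∀ b, (a, b) ∈ E → (b, x) ∈ I}))) := by
  refine ⟨{p | p.1 = true ∨ p.2 = false}, Set.univ, ⟨fun _ => trivial, fun _ => trivial,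
    fun _ _ => trivial⟩, ?_, ?_, ?_⟩
  · intro b
    ext a
    simp only [Set.mem_setOf_eq, Set.mem_univ, true_iff, downPolar, upPolar]
    intro x hx
    exact hx a trivial
  · intro a
    ext b
    simp only [Set.mem_setOf_eq, Set.mem_univ, true_iff, downPolar, upPolar]
    intro x hx
    exact hx b trivial
  · rintro ⟨h1, -⟩
    have := h1 true
    have hmem : true ∈ downPolar {p : Bool × Bool | p.1 = true ∨ p.2 = false}
        (upPolar {p : Bool × Bool | p.1 = true ∨ p.2 = false}
          {a : Bool | ∀ b, (a, b) ∈ (Set.univ : Set (Bool × Bool)) → (b, true) ∈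
            {p : Bool × Bool | p.1 = true ∨ p.2 = false}}) := by
      intro x hx
      rcases x with _ | _
      · exact Or.inr rfl
      · exact Or.inl rfl
    rw [← this] at hmem
    have := hmem false trivial
    simp at this
end

section
/- The class of Kripke frames (W, R) whose complement relation R^c is transitive is not closed under disjoint unions: taking W₁ = {a₁, b₁}, R₁ = {(a₁,b₁)} and W₂ = {a₂, b₂}, R₂ = {(a₂,b₂)}, the complement of each Rᵢ in Wᵢ × Wᵢ is transitive, but the complement of R₁ ⊔ R₂ in the disjoint union (W₁ ⊔ W₂) × (W₁ ⊔ W₂) is not transitive. -/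
theorem complement_transitive_not_closed_under_disjoint_union :
    -- each component: complement of R₁ = {(a₁,b₁)} on W₁ = {a₁,b₁} is transitive
    Transitive (fun u v : Bool => ¬ (u = false ∧ v = true)) ∧
    Transitive (fun u v : Bool => ¬ (u = false ∧ v = true)) ∧
    -- complement of the disjoint union relation is not transitive
    ¬ Transitive (fun u v : Bool ⊕ Bool =>
        ¬ ((u = Sum.inl false ∧ v = Sum.inl true) ∨
           (u = Sum.inr false ∧ v = Sum.inr true))) := by
  refine ⟨?_, ?_, ?_⟩
  · intro u v w huv hvw
    rintro ⟨rfl, rfl⟩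
    cases v <;> simp_all
  · intro u v w huv hvw
    rintro ⟨rfl, rfl⟩
    cases v <;> simp_all
  · intro h
    have := h (x := Sum.inl false) (y := Sum.inr false) (z := Sum.inl true)
      (by simp) (by simp)
    simp at this
end

section
/- Let (A, X, I) be a formal context with concept lattice ordered by extension inclusion, and let R ⊆ X × A be an I-compatible relation (R⁽⁰⁾[a] Galois-stable in X for each a, R⁽¹⁾[x] Galois-stable in A for each x). Define, for a concept with extension B ⊆ A, the set ⟨R⟩B := R⁽⁰⁾[B] = {x ∣ ∀a∈B, xRa}. Then for any family {B_j} of concept extensions, R⁽⁰⁾[⋁_j B_j] = ⋂_j R⁽⁰⁾[B_j], where ⋁_j B_j := I⁽⁰⁾[⋂_j I⁽¹⁾[B_j]] is the join of the concepts. In particular the diamond operation ◇, defined on intensions by ⟦◇c⟧ := R⁽⁰⁾[extension of c], turns joins of concepts into intersections of intensions. -/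
/-- `R⁽⁰⁾[B] = {x ∣ ∀ a ∈ B, xRa}` for `R ⊆ X × A`. -/
def diaPolar {A X : Type*} (R : Set (X × A)) (B : Set A) : Set X :=
  {x | ∀ a ∈ B, (x, a) ∈ R}

theorem dia_join_to_meet {A X : Type*} (I : Set (A × X)) (R : Set (X × A))
    {ι : Type*} (B : ι → Set A)
    (hB : ∀ j, B j = downPolar I (upPolar I (B j)))
    (hcomp0 : ∀ a : A, ({x | (x, a) ∈ R} : Set X) =
        upPolar I (downPolar I {x | (x, a) ∈ R}))
    (hcomp1 : ∀ x : X, ({a | (x, a) ∈ R} : Set A) =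
        downPolar I (upPolar I {a | (x, a) ∈ R})) :
    diaPolar R (downPolar I (⋂ j, upPolar I (B j))) = ⋂ j, diaPolar R (B j) := by
  ext x
  simp only [Set.mem_iInter, diaPolar, Set.mem_setOf_eq]
  constructor
  · intro h j a ha
    apply h
    intro y hy
    rw [hB j] at ha
    exact ha y (Set.mem_iInter.mp hy j)
  · intro h a ha
    -- a ∈ downPolar I (⋂ j, upPolar I (B j)); show (x,a) ∈ R, i.e. a ∈ R¹[x]
    have key : downPolar I (⋂ j, upPolar I (B j)) ⊆ {a | (x, a) ∈ R} := by
      rw [hcomp1 x]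
      intro b hb y hy
      apply hb
      apply Set.mem_iInter.mpr
      intro j b' hb'
      exact hy b' (h j b' hb')
    exact key ha
end
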